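/- For any U in SU(n), the matrix U·Uᵀ (where Uᵀ is the transpose, not conjugate transpose) is a symmetric unitary matrix of determinant 1, and there exist Θ ∈ O(n) real orthogonal and a diagonal unitary Σ with U·Uᵀ = Θ Σ Θᵀ. -/

import Mathlib

open Matrix Complex

theorem aux_symm_unitary_diag (n : ℕ) (M : Matrix (Fin n) (Fin n) ℂ)
    (hsymm : Mᵀ = M) (hMu : M ∈ Matrix.unitaryGroup (Fin n) ℂ) :
    ∃ (Θ : Matrix (Fin n) (Fin n) ℝ) (σ : Fin n → ℂ),
      Θ ∈ Matrix.orthogonalGroup (Fin n) ℝ ∧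
      (∀ i, ‖σ i‖ = 1) ∧
      M = (Θ.map (Complex.ofReal)) * Matrix.diagonal σ * (Θ.map (Complex.ofReal))ᵀ := by
  classical
  have hsym' : ∀ p q, M p q = M q p := fun p q => (congrFun (congrFun hsymm q) p : Mᵀ q p = M q p)
  have h1 : M * star M = 1 := hMu.2
  -- key entrywise identity
  have key : ∀ i j, (∑ k, M i k * (starRingEnd ℂ) (M j k)) = if i = j then 1 else 0 := by
    intro i j
    have := congrFun (congrFun h1 i) j
    simpa [Matrix.mul_apply, Matrix.one_apply, Matrix.star_eq_conjTranspose,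
      Matrix.conjTranspose_apply] using this
  set A : Matrix (Fin n) (Fin n) ℝ := Matrix.of fun i j => (M i j).re with hA
  set B : Matrix (Fin n) (Fin n) ℝ := Matrix.of fun i j => (M i j).im with hB
  have hABBA : A * B = B * A := by
    ext i j
    have h := congrArg Complex.im (key i j)
    simp only [Complex.im_sum, Complex.mul_im, Complex.conj_re, Complex.conj_im] at h
    have him : (if i = j then (1:ℂ) else 0).im = 0 := by split <;> simp
    rw [him] at h
    have h0 : (∑ k, ((M i k).im * (M j k).re - (M i k).re * (M j k).im)) = 0 := by
      rw [← h]; congr 1; ext k; ring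
    rw [Finset.sum_sub_distrib] at h0
    simp only [Matrix.mul_apply, hA, hB, Matrix.of_apply]
    have e1 : (∑ k, (M i k).re * (M k j).im) = ∑ k, (M i k).re * (M j k).im := by
      congr 1; ext k; rw [hsym' k j]
    have e2 : (∑ k, (M i k).im * (M k j).re) = ∑ k, (M i k).im * (M j k).re := by
      congr 1; ext k; rw [hsym' k j]
    rw [e1, e2]
    linarith [h0]
  have hAB1 : A * A + B * B = 1 := by
    ext i j
    have h := congrArg Complex.re (key i j)
    simp only [Complex.re_sum, Complex.mul_re, Complex.conj_re, Complex.conj_im] at h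
    simp only [Matrix.add_apply, Matrix.mul_apply, hA, hB, Matrix.of_apply, Matrix.one_apply]
    have e1 : (∑ k, (M i k).re * (M k j).re) = ∑ k, (M i k).re * (M j k).re := by
      congr 1; ext k; rw [hsym' k j]
    have e2 : (∑ k, (M i k).im * (M k j).im) = ∑ k, (M i k).im * (M j k).im := by
      congr 1; ext k; rw [hsym' k j]
    rw [e1, e2, ← Finset.sum_add_distrib]
    have : (∑ k, ((M i k).re * (M j k).re + (M i k).im * (M j k).im))
        = ∑ k, ((M i k).re * (M j k).re - (M i k).im * -(M j k).im) := by
      congr 1; ext k; ring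
    rw [this, h]
    split <;> simp
  -- Hermitian (symmetric) real matrices
  have hAsym : A.IsHermitian := by
    ext i j
    simp only [Matrix.conjTranspose_apply, hA, Matrix.of_apply, star_trivial]
    exact congrArg Complex.re (hsym' j i)
  have hBsym : B.IsHermitian := by
    ext i j
    simp only [Matrix.conjTranspose_apply, hB, Matrix.of_apply, star_trivial]
    exact congrArg Complex.im (hsym' j i)
  set TA := Matrix.toEuclideanLin A with hTAdef
  set TB := Matrix.toEuclideanLin B with hTBdef
  have hTA : TA.IsSymmetric := Matrix.isHermitian_iff_isSymmetric.mp hAsym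
  have hTB : TB.IsSymmetric := Matrix.isHermitian_iff_isSymmetric.mp hBsym
  have hmulE : ∀ (X Y : Matrix (Fin n) (Fin n) ℝ),
      Matrix.toEuclideanLin (X * Y) = Matrix.toEuclideanLin X * Matrix.toEuclideanLin Y := by
    intro X Y
    rw [Matrix.toEuclideanLin_eq_toLin, Matrix.toLin_mul _ (PiLp.basisFun 2 ℝ (Fin n))]
    rfl
  have hcomm : Commute TA TB := by
    show TA * TB = TB * TA
    rw [hTAdef, hTBdef, ← hmulE, ← hmulE, hABBA]
  set V : ℝ × ℝ → Submodule ℝ (EuclideanSpace ℝ (Fin n)) :=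
    fun p => Module.End.eigenspace TA p.2 ⊓ Module.End.eigenspace TB p.1 with hV
  have hInt : DirectSum.IsInternal V := hTA.directSum_isInternal_of_commute hTB hcomm
  have horth : OrthogonalFamily ℝ (fun p => V p) (fun p => (V p).subtypeₗᵢ) :=
    LinearMap.IsSymmetric.orthogonalFamily_eigenspace_inf_eigenspace hTA hTB
  have hInt0 : DirectSum.IsInternal (fun p : {p : ℝ × ℝ // V p ≠ ⊥} => V p) :=
    DirectSum.isInternal_ne_bot_iff.mpr hInt
  have hfin : Finite {p : ℝ × ℝ // V p ≠ ⊥} :=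
    WellFoundedGT.finite_ne_bot_of_iSupIndep hInt.submodule_iSupIndep
  have : Fintype {p : ℝ × ℝ // V p ≠ ⊥} := Fintype.ofFinite _
  have horth0 : OrthogonalFamily ℝ (fun p : {p : ℝ × ℝ // V p ≠ ⊥} => V p)
      (fun p => (V p.1).subtypeₗᵢ) :=
    fun i j hij => horth (fun h => hij (Subtype.ext h))
  have hn : Module.finrank ℝ (EuclideanSpace ℝ (Fin n)) = n := finrank_euclideanSpace_fin
  set b := hInt0.subordinateOrthonormalBasis hn horth0 with hbdef
  set α : Fin n → ℝ := fun a => (hInt0.subordinateOrthonormalBasisIndex hn a horth0).1.2 with hαdef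
  set β : Fin n → ℝ := fun a => (hInt0.subordinateOrthonormalBasisIndex hn a horth0).1.1 with hβdef
  have hsub : ∀ a, b a ∈ (Module.End.eigenspace TA (α a) ⊓ Module.End.eigenspace TB (β a)) :=
    fun a => hInt0.subordinateOrthonormalBasis_subordinate hn a horth0
  have hTAb : ∀ a, TA (b a) = α a • b a := fun a => Module.End.mem_eigenspace_iff.mp (hsub a).1
  have hTBb : ∀ a, TB (b a) = β a • b a := fun a => Module.End.mem_eigenspace_iff.mp (hsub a).2
  set Θ : Matrix (Fin n) (Fin n) ℝ := Matrix.of (fun i j => b j i) with hΘ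
  have hΘTΘ : Θᵀ * Θ = 1 := by
    ext j k
    have h := (orthonormal_iff_ite.mp b.orthonormal) j k
    rw [PiLp.inner_apply] at h
    simpa [Matrix.mul_apply, hΘ, Matrix.one_apply, RCLike.inner_apply, mul_comm] using h
  have hΘΘT : Θ * Θᵀ = 1 := mul_eq_one_comm.mp hΘTΘ
  have hΘmem : Θ ∈ Matrix.orthogonalGroup (Fin n) ℝ := by
    rw [Matrix.mem_orthogonalGroup_iff]
    exact hΘΘT
  -- matrix form of the eigenvalue equations
  have hmv : ∀ (X : Matrix (Fin n) (Fin n) ℝ) (μ : ℝ) (j : Fin n),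
      Matrix.toEuclideanLin X (b j) = μ • b j →
      ∀ i, (∑ k, X i k * b j k) = μ * b j i := by
    intro X μ j h i
    have h2 := congrArg (fun v => v i) h
    simpa [Matrix.toEuclideanLin_apply, Matrix.mulVec, dotProduct,
      PiLp.smul_apply,
      smul_eq_mul] using h2
  have hAΘ : A * Θ = Θ * Matrix.diagonal α := by
    ext i j
    rw [Matrix.mul_apply, Matrix.mul_diagonal]
    have := hmv A (α j) j (hTAb j) i
    simp only [hΘ, Matrix.of_apply]
    rw [this]; ring
  have hBΘ : B * Θ = Θ * Matrix.diagonal β := by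
    ext i j
    rw [Matrix.mul_apply, Matrix.mul_diagonal]
    have := hmv B (β j) j (hTBb j) i
    simp only [hΘ, Matrix.of_apply]
    rw [this]; ring
  -- eigenvalues lie on the unit circle
  have hcircle : ∀ j, α j * α j + β j * β j = 1 := by
    have h1 : A * A * Θ = Θ * Matrix.diagonal (fun j => α j * α j) := by
      rw [mul_assoc, hAΘ, ← mul_assoc, hAΘ, mul_assoc, Matrix.diagonal_mul_diagonal]
    have h2 : B * B * Θ = Θ * Matrix.diagonal (fun j => β j * β j) := by
      rw [mul_assoc, hBΘ, ← mul_assoc, hBΘ, mul_assoc, Matrix.diagonal_mul_diagonal]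
    have h3 : Θ = Θ * Matrix.diagonal (fun j => α j * α j + β j * β j) := by
      have : (A * A + B * B) * Θ
          = Θ * (Matrix.diagonal (fun j => α j * α j) + Matrix.diagonal (fun j => β j * β j)) := by
        rw [Matrix.add_mul, h1, h2, Matrix.mul_add]
      rw [hAB1, one_mul, Matrix.diagonal_add] at this
      exact this
    have h4 : Matrix.diagonal (fun j => α j * α j + β j * β j) = 1 := by
      calc Matrix.diagonal (fun j => α j * α j + β j * β j)
          = Θᵀ * Θ * Matrix.diagonal (fun j => α j * α j + β j * β j) := by
            rw [hΘTΘ, one_mul]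
        _ = Θᵀ * Θ := by rw [mul_assoc, ← h3, hΘTΘ]
        _ = 1 := hΘTΘ
    intro j
    have := congrFun (congrFun h4 j) j
    simpa [Matrix.one_apply] using this
  -- complexify
  set Θc : Matrix (Fin n) (Fin n) ℂ := Θ.map Complex.ofReal with hΘc
  have hmapmul : ∀ X Y : Matrix (Fin n) (Fin n) ℝ,
      (X * Y).map Complex.ofReal = X.map Complex.ofReal * Y.map Complex.ofReal := by
    intro X Y; ext i j
    simp [Matrix.mul_apply, Matrix.map_apply]
  set σ : Fin n → ℂ := fun j => (α j : ℂ) + (β j : ℂ) * Complex.I with hσ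
  have hMdecomp : M = A.map Complex.ofReal + Complex.I • B.map Complex.ofReal := by
    ext i j
    simp only [Matrix.add_apply, Matrix.smul_apply, Matrix.map_apply, hA, hB, Matrix.of_apply,
      smul_eq_mul]
    rw [mul_comm]
    exact (Complex.re_add_im (M i j)).symm
  have hdiagmap : ∀ (d : Fin n → ℝ),
      (Matrix.diagonal d).map Complex.ofReal = Matrix.diagonal (fun j => (d j : ℂ)) := by
    intro d
    exact Matrix.diagonal_map (by simp)
  have hMΘ : M * Θc = Θc * Matrix.diagonal σ := by
    calc M * Θc
        = (A.map Complex.ofReal) * Θc + Complex.I • ((B.map Complex.ofReal) * Θc) := by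
          rw [hMdecomp, Matrix.add_mul, Matrix.smul_mul]
      _ = Θc * Matrix.diagonal (fun j => (α j : ℂ))
          + Complex.I • (Θc * Matrix.diagonal (fun j => (β j : ℂ))) := by
          rw [hΘc, ← hmapmul, ← hmapmul, hAΘ, hBΘ, hmapmul, hmapmul, hdiagmap, hdiagmap]
      _ = Θc * Matrix.diagonal σ := by
          rw [← mul_smul_comm, ← Matrix.mul_add]
          congr 1
          ext i j
          by_cases hij : i = j
          · subst hij
            simp [Matrix.diagonal_apply_eq, hσ, mul_comm]
          · simp [Matrix.diagonal_apply_ne _ hij, hij]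
  have hΘcΘcT : Θc * Θcᵀ = 1 := by
    calc Θc * Θcᵀ = Θc * (Θᵀ).map Complex.ofReal := by rw [Matrix.transpose_map]
      _ = (Θ * Θᵀ).map Complex.ofReal := (hmapmul _ _).symm
      _ = (1 : Matrix (Fin n) (Fin n) ℝ).map Complex.ofReal := by rw [hΘΘT]
      _ = 1 := Matrix.map_one _ (by simp) (by simp)
  refine ⟨Θ, σ, hΘmem, ?_, ?_⟩
  · intro j
    have hre : (σ j).re = α j := by simp [hσ]
    have him : (σ j).im = β j := by simp [hσ]
    rw [Complex.norm_def, Complex.normSq_apply, hre, him,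
      hcircle j, Real.sqrt_one]
  · calc M = M * 1 := (mul_one M).symm
      _ = M * (Θc * Θcᵀ) := by rw [hΘcΘcT]
      _ = (M * Θc) * Θcᵀ := by rw [mul_assoc]
      _ = Θc * Matrix.diagonal σ * Θcᵀ := by rw [hMΘ]


/-- For `U ∈ SU(n)`, the matrix `U * Uᵀ` is symmetric, unitary, of determinant 1,
and there exist a real orthogonal `Θ` and a diagonal unitary `Σ` with `U Uᵀ = Θ Σ Θᵀ`. -/
theorem UUt_symmetric_unitary_diagonalizable (n : ℕ) (U : Matrix (Fin n) (Fin n) ℂ)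
    (hU : U ∈ Matrix.unitaryGroup (Fin n) ℂ) (hdet : U.det = 1) :
    (U * Uᵀ)ᵀ = U * Uᵀ ∧
    (U * Uᵀ) ∈ Matrix.unitaryGroup (Fin n) ℂ ∧
    (U * Uᵀ).det = 1 ∧
    ∃ (Θ : Matrix (Fin n) (Fin n) ℝ) (σ : Fin n → ℂ),
      Θ ∈ Matrix.orthogonalGroup (Fin n) ℝ ∧
      (∀ i, ‖σ i‖ = 1) ∧
      U * Uᵀ = (Θ.map (Complex.ofReal)) * Matrix.diagonal σ * (Θ.map (Complex.ofReal))ᵀ := by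
  have hsymm : (U * Uᵀ)ᵀ = U * Uᵀ := by
    rw [Matrix.transpose_mul, Matrix.transpose_transpose]
  have hst : star Uᵀ = (star U)ᵀ := by
    ext a c
    simp [Matrix.star_eq_conjTranspose, Matrix.conjTranspose_apply]
  have hT : Uᵀ ∈ Matrix.unitaryGroup (Fin n) ℂ := by
    constructor
    · show star Uᵀ * Uᵀ = 1
      rw [hst, ← Matrix.transpose_mul, hU.2, Matrix.transpose_one]
    · show Uᵀ * star Uᵀ = 1
      rw [hst, ← Matrix.transpose_mul, hU.1, Matrix.transpose_one]
  have hMu : (U * Uᵀ) ∈ Matrix.unitaryGroup (Fin n) ℂ := mul_mem hU hT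
  refine ⟨hsymm, hMu, ?_, ?_⟩
  · rw [Matrix.det_mul, Matrix.det_transpose, hdet, one_mul]
  · exact aux_symm_unitary_diag n (U * Uᵀ) hsymm hMu
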